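/- Let g = sl(2) with standard basis e, f, h, Killing-normalized invariant form with (e,f) = 1 and (h,h) = 2, Cartan subalgebra spanned by h, and coordinate λ on h* given by λ(h). Then the meromorphic function r(λ) = (1/λ) e⊗f − (1/λ) f⊗e (with X = Δ = {α, −α}) satisfies the classical dynamical Yang–Baxter equation with zero weight and zero coupling constant. -/
import Mathlib


open scoped TensorProduct

noncomputable section

/-- `g = sl(2) ⊂ A := Mat₂(ℂ)`: the standard basis. -/
abbrev MatA : Type := Matrix (Fin 2) (Fin 2) ℂ

def eM : MatA := !![0, 1; 0, 0]
def fM : MatA := !![0, 0; 1, 0]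
def hM : MatA := !![1, 0; 0, -1]

/-- `g ⊗ g`, computed inside `A ⊗ A`. -/
abbrev T2 : Type := MatA ⊗[ℂ] MatA
/-- `g ⊗ g ⊗ g`, computed inside `A ⊗ A ⊗ A`. -/
abbrev T3 : Type := MatA ⊗[ℂ] (MatA ⊗[ℂ] MatA)

/-- `r ↦ r¹²`. -/
def p12 : T2 →ₐ[ℂ] T3 :=
  Algebra.TensorProduct.map (AlgHom.id ℂ MatA)
    (Algebra.TensorProduct.includeLeft : MatA →ₐ[ℂ] MatA ⊗[ℂ] MatA)

/-- `r ↦ r¹³`. -/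
def p13 : T2 →ₐ[ℂ] T3 :=
  Algebra.TensorProduct.map (AlgHom.id ℂ MatA)
    (Algebra.TensorProduct.includeRight : MatA →ₐ[ℂ] MatA ⊗[ℂ] MatA)

/-- `r ↦ r²³`. -/
def p23 : T2 →ₐ[ℂ] T3 := Algebra.TensorProduct.includeRight

/-- The cyclic permutation `a ⊗ b ⊗ c ↦ c ⊗ a ⊗ b` on the triple tensor power. -/
def cyc : T3 →ₗ[ℂ] T3 :=
  (TensorProduct.comm ℂ (MatA ⊗[ℂ] MatA) MatA).toLinearMap ∘ₗ
    (TensorProduct.assoc ℂ MatA MatA MatA).symm.toLinearMap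

/-- The alternation (cyclic sum) `Alt`. -/
def AltT (u : T3) : T3 := u + cyc u + cyc (cyc u)

/-- `c = e ⊗ f - f ⊗ e`. -/
def cT : T2 := eM ⊗ₜ[ℂ] fM - fM ⊗ₜ[ℂ] eM

/-- The dynamical r-matrix `r(λ) = (1/λ) e ⊗ f - (1/λ) f ⊗ e` of the `X = Δ`,
zero-coupling-constant case of the Etingof–Varchenko theorem for `sl(2)`. -/
def rEV (z : ℂ) : T2 := (1 / z) • cT

def QM : MatA := !![0, 0; 0, 1]

private lemma mEF : eM * fM = QM + hM := by
  ext i j; fin_cases i <;> fin_cases j <;> simp [eM, fM, QM, hM, Matrix.mul_apply, Fin.sum_univ_two]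
private lemma mFE : fM * eM = QM := by
  ext i j; fin_cases i <;> fin_cases j <;> simp [eM, fM, QM, Matrix.mul_apply, Fin.sum_univ_two]
private lemma mEE : eM * eM = 0 := by
  ext i j; fin_cases i <;> fin_cases j <;> simp [eM, Matrix.mul_apply, Fin.sum_univ_two]
private lemma mFF : fM * fM = 0 := by
  ext i j; fin_cases i <;> fin_cases j <;> simp [fM, Matrix.mul_apply, Fin.sum_univ_two]
private lemma mHE : hM * eM = eM := by
  ext i j; fin_cases i <;> fin_cases j <;> simp [eM, hM, Matrix.mul_apply, Fin.sum_univ_two]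
private lemma mEH : eM * hM = -eM := by
  ext i j; fin_cases i <;> fin_cases j <;> simp [eM, hM, Matrix.mul_apply, Fin.sum_univ_two]
private lemma mHF : hM * fM = -fM := by
  ext i j; fin_cases i <;> fin_cases j <;> simp [fM, hM, Matrix.mul_apply, Fin.sum_univ_two]
private lemma mFH : fM * hM = fM := by
  ext i j; fin_cases i <;> fin_cases j <;> simp [fM, hM, Matrix.mul_apply, Fin.sum_univ_two]

private lemma t3_sub_mul (a b c : T3) : (a-b)*c = a*c - b*c := sub_mul a b c
private lemma t3_mul_sub (a b c : T3) : a*(b-c) = a*b - a*c := mul_sub a b c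
private lemma t3_smul_mul (r : ℂ) (a b : T3) : (r • a)*b = r • (a*b) := smul_mul_assoc r a b
private lemma t3_mul_smul (r : ℂ) (a b : T3) : a*(r • b) = r • (a*b) := mul_smul_comm r a b

set_option synthInstance.maxHeartbeats 1000000 in
set_option maxHeartbeats 1000000 in
/-- With the conventions `(e,f) = 1`, `(h,h) = 2`, coordinate `λ = λ(h)` on `h*` and
`dr(λ) = h ⊗ dr/dλ`, the function `r(λ) = (1/λ) e ⊗ f - (1/λ) f ⊗ e` satisfies the classical
dynamical Yang–Baxter equation `Alt(dr) + [r¹²,r¹³] + [r¹²,r²³] + [r¹³,r²³] = 0`, the zero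
weight condition, and skew-symmetry (zero coupling constant). -/
theorem stmt8 :
    ∀ z : ℂ, z ≠ 0 →
      (AltT (hM ⊗ₜ[ℂ] (deriv (fun w : ℂ => 1 / w) z • cT)) +
          ⁅p12 (rEV z), p13 (rEV z)⁆ + ⁅p12 (rEV z), p23 (rEV z)⁆ +
          ⁅p13 (rEV z), p23 (rEV z)⁆ = 0) ∧
      ⁅hM ⊗ₜ[ℂ] (1 : MatA) + (1 : MatA) ⊗ₜ[ℂ] hM, rEV z⁆ = 0 ∧
      rEV z + TensorProduct.comm ℂ MatA MatA (rEV z) = 0 := by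
  intro z hz
  have hderiv : deriv (fun w : ℂ => 1 / w) z = -((1/z)*(1/z)) := by
    simp [one_div, deriv_inv]; ring
  refine ⟨?_, ?_, ?_⟩
  · rw [hderiv]
    simp only [rEV, cT, AltT, p12, p13, p23, map_smul, map_sub, map_add,
      Algebra.TensorProduct.map_tmul, Algebra.TensorProduct.includeLeft_apply,
      Algebra.TensorProduct.includeRight_apply, AlgHom.coe_id, id_eq,
      Ring.lie_def, t3_smul_mul, t3_mul_smul, smul_smul, t3_sub_mul, t3_mul_sub,
      Algebra.TensorProduct.tmul_mul_tmul, one_mul, mul_one,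
      mEF, mFE, mEE, mFF, mHE, mEH, mHF, mFH,
      TensorProduct.tmul_smul, TensorProduct.tmul_sub, TensorProduct.sub_tmul,
      TensorProduct.tmul_add, TensorProduct.add_tmul, TensorProduct.tmul_neg,
      TensorProduct.neg_tmul, TensorProduct.zero_tmul, TensorProduct.tmul_zero,
      smul_sub, smul_add, smul_zero, smul_neg,
      cyc, LinearMap.comp_apply, LinearEquiv.coe_coe,
      TensorProduct.assoc_symm_tmul, TensorProduct.comm_tmul]
    module
  · simp only [rEV, cT, Ring.lie_def, smul_sub, mul_sub, sub_mul, mul_smul_comm,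
      smul_mul_assoc, add_mul, mul_add, Algebra.TensorProduct.tmul_mul_tmul,
      mEF, mFE, mHE, mEH, mHF, mFH, one_mul, mul_one,
      TensorProduct.tmul_neg, TensorProduct.neg_tmul, TensorProduct.tmul_add,
      TensorProduct.add_tmul]
    module
  · have hcomm : (TensorProduct.comm ℂ MatA MatA) (rEV z)
        = (1/z) • (fM ⊗ₜ[ℂ] eM - eM ⊗ₜ[ℂ] fM) := by
      rw [rEV, cT, map_smul, map_sub, TensorProduct.comm_tmul, TensorProduct.comm_tmul]
    rw [hcomm]; unfold rEV cT; module

end
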